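/- arXiv:1711.07715 — 2 statements merged into one kernel-verified Lean document; each statement's English description precedes it below -/
import Mathlib

section
/- Let ((Y_i, B_i))_{i∈ℕ} be an i.i.d. sequence of pairs of real random variables on a probability space (Ω, F, P) such that Y₀ is integrable, each B_i takes values in {0,1}, and p := P(B₀ = 1) > 0. Then for every n ≥ 1, E[ R_n · 1_{∑_{i<n} B_i > 0} ] = (E[Y₀B₀]/p) · P(∑_{i<n} B_i > 0), where R_n = (∑_{i<n} Y_i B_i)/(∑_{i<n} B_i). Consequently, the bias of the ratio estimator on the event that it is defined equals Δ = E[Y₀B₀]/p − E[Y₀] = Cov(Y₀, B₀)/p, which vanishes if and only if Y₀ and B₀ are uncorrelated. (Finite-sample, pointwise version of Proposition A.1 on the bias of the classical estimator μ̂(t).) -/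
open MeasureTheory ProbabilityTheory Filter Topology

/-- Finite-sample, pointwise version of Proposition A.1 on the bias of the
classical estimator: for an i.i.d. sequence of pairs `(Y_i, B_i)` with `Y₀`
integrable, `B_i ∈ {0,1}` and `p := P(B₀ = 1) > 0`, for every `n ≥ 1`,
`E[R_n · 1_{∑_{i<n} B_i > 0}] = (E[Y₀B₀]/p) · P(∑_{i<n} B_i > 0)`.
Consequently the bias on the event that `R_n` is defined equals
`Δ = E[Y₀B₀]/p − E[Y₀] = Cov(Y₀,B₀)/p`, which vanishes iff `Y₀` and `B₀` are
uncorrelated. -/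
theorem ratio_estimator_bias {Ω : Type*} [MeasureSpace Ω]
    [IsProbabilityMeasure (ℙ : Measure Ω)]
    (Y B : ℕ → Ω → ℝ)
    (hmeas : ∀ i, Measurable fun ω => (Y i ω, B i ω))
    (hindep : iIndepFun (fun i ω => (Y i ω, B i ω)) ℙ)
    (hident : ∀ i, IdentDistrib (fun ω => (Y i ω, B i ω)) (fun ω => (Y 0 ω, B 0 ω)) ℙ ℙ)
    (hint : Integrable (Y 0))
    (h01 : ∀ i, ∀ ω, B i ω = 0 ∨ B i ω = 1)
    (hp : 0 < ℙ {ω | B 0 ω = 1}) :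
    (∀ n ≥ 1,
      (∫ ω, if 0 < ∑ i ∈ Finset.range n, B i ω then
          (∑ i ∈ Finset.range n, Y i ω * B i ω) / ∑ i ∈ Finset.range n, B i ω
        else 0)
        = ((∫ ω', Y 0 ω' * B 0 ω') / (ℙ {ω' | B 0 ω' = 1}).toReal)
          * (ℙ {ω | 0 < ∑ i ∈ Finset.range n, B i ω}).toReal) ∧
      (∫ ω', Y 0 ω' * B 0 ω') / (ℙ {ω' | B 0 ω' = 1}).toReal - (∫ ω', Y 0 ω')
        = ((∫ ω', Y 0 ω' * B 0 ω') - (∫ ω', Y 0 ω') * ∫ ω', B 0 ω')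
          / (ℙ {ω' | B 0 ω' = 1}).toReal ∧
      ((∫ ω', Y 0 ω' * B 0 ω') / (ℙ {ω' | B 0 ω' = 1}).toReal - (∫ ω', Y 0 ω') = 0 ↔
        (∫ ω', Y 0 ω' * B 0 ω') - (∫ ω', Y 0 ω') * ∫ ω', B 0 ω' = 0) := by
  have hYm : ∀ i, Measurable (Y i) := fun i => measurable_fst.comp (hmeas i)
  have hBm : ∀ i, Measurable (B i) := fun i => measurable_snd.comp (hmeas i)
  have hB0 : ∀ i ω, 0 ≤ B i ω := fun i ω => by rcases h01 i ω with h | h <;> simp [h]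
  set p : ℝ := (ℙ {ω' | B 0 ω' = 1}).toReal with hp_def
  have hpset : MeasurableSet {ω | B 0 ω = 1} := hBm 0 (measurableSet_singleton 1)
  have hppos : 0 < p := ENNReal.toReal_pos hp.ne' (measure_ne_top _ _)
  have hEB : ∫ ω', B 0 ω' = p := by
    have h1 : (fun ω => B 0 ω) = Set.indicator {ω | B 0 ω = 1} (1 : Ω → ℝ) := by
      funext ω
      rcases h01 0 ω with h | h <;> simp [Set.indicator_apply, h]
    calc ∫ ω', B 0 ω' = ∫ ω', Set.indicator {ω | B 0 ω = 1} (1 : Ω → ℝ) ω' := by rw [← h1]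
    _ = p := integral_indicator_one hpset
  have hYint : ∀ i, Integrable (Y i) :=
    fun i => (((hident i).comp measurable_fst).integrable_iff).mpr hint
  have hYBint : ∀ i, Integrable (fun ω => Y i ω * B i ω) := by
    intro i
    refine (hYint i).abs.mono' ((hYm i).mul (hBm i)).aestronglyMeasurable
      (ae_of_all _ fun ω => ?_)
    rw [Real.norm_eq_abs, abs_mul]
    rcases h01 i ω with h | h <;> simp [h, abs_nonneg]
  have hEYB : ∀ i, ∫ ω', Y i ω' * B i ω' = ∫ ω', Y 0 ω' * B 0 ω' := fun i =>
    ((hident i).comp (measurable_fst.mul measurable_snd)).integral_eq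
  have hEBi : ∀ i, ∫ ω', B i ω' = p := fun i =>
    (((hident i).comp measurable_snd).integral_eq).trans hEB
  set m : ℝ := ∫ ω', Y 0 ω' * B 0 ω' with hm_def
  refine ⟨?_, ?_, ?_⟩
  · -- main identity
    intro n _hn
    set S : Ω → ℝ := fun ω => ∑ i ∈ Finset.range n, B i ω with hS_def
    have hSm : Measurable S := Finset.measurable_sum _ fun i _ => hBm i
    set g : ℕ → Ω → ℝ :=
      fun j ω => (1 + ∑ i ∈ (Finset.range n).erase j, B i ω)⁻¹ with hg_def
    have hgm : ∀ j, Measurable (g j) := fun j =>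
      (measurable_const.add (Finset.measurable_sum _ fun i _ => hBm i)).inv
    have hsum_nonneg : ∀ j ω, (0:ℝ) ≤ ∑ i ∈ (Finset.range n).erase j, B i ω :=
      fun j ω => Finset.sum_nonneg fun i _ => hB0 i ω
    have hgpos : ∀ j ω, 0 < 1 + ∑ i ∈ (Finset.range n).erase j, B i ω := fun j ω => by
      linarith [hsum_nonneg j ω]
    have hgle : ∀ j ω, g j ω ≤ 1 := fun j ω => by
      rw [hg_def]
      rw [inv_le_one_iff₀]
      right; linarith [hsum_nonneg j ω]
    have hg0 : ∀ j ω, 0 ≤ g j ω := fun j ω => le_of_lt (inv_pos.mpr (hgpos j ω))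
    -- key pointwise identity
    have key : ∀ j ∈ Finset.range n, ∀ ω,
        B j ω * (if 0 < S ω then (S ω)⁻¹ else 0) = B j ω * g j ω := by
      intro j hj ω
      rcases h01 j ω with h | h
      · simp [h]
      · have hSj : S ω = 1 + ∑ i ∈ (Finset.range n).erase j, B i ω := by
          have h2 : (∑ i ∈ Finset.range n, B i ω)
              = 1 + ∑ i ∈ (Finset.range n).erase j, B i ω := by
            rw [← Finset.add_sum_erase _ _ hj, h]
          exact h2
        have hSpos : 0 < S ω := by rw [hSj]; exact hgpos j ω
        rw [if_pos hSpos, hSj, hg_def]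
    -- independence
    have hIndepPair : ∀ j, IndepFun (fun ω => (Y j ω, B j ω)) (g j) ℙ := by
      intro j
      have hdisj : Disjoint ({j} : Finset ℕ) ((Finset.range n).erase j) := by
        simp [Finset.disjoint_left]
      have H := hindep.indepFun_finset {j} ((Finset.range n).erase j) hdisj hmeas
      have H2 := H.comp
        (φ := fun v : ({j} : Finset ℕ) → ℝ × ℝ => v ⟨j, Finset.mem_singleton_self j⟩)
        (ψ := fun v : (((Finset.range n).erase j : Finset ℕ) : Type) → ℝ × ℝ =>
          (1 + ∑ i : ((Finset.range n).erase j : Finset ℕ), (v i).2)⁻¹)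
        (measurable_pi_apply (X := fun _ : ({j} : Finset ℕ) => ℝ × ℝ) _)
        ((measurable_const.add
          (Finset.measurable_sum _ fun i _ => (measurable_pi_apply i).snd)).inv)
      have heq : (fun a => (1 + ∑ i : ((Finset.range n).erase j : Finset ℕ), B (i : ℕ) a)⁻¹)
          = g j := by
        funext a
        rw [hg_def, Finset.sum_coe_sort ((Finset.range n).erase j) (fun i => B i a)]
      rw [← heq]
      exact H2
    have hIndYB : ∀ j, IndepFun (fun ω => Y j ω * B j ω) (g j) ℙ := fun j =>
      (hIndepPair j).comp (measurable_fst.mul measurable_snd) measurable_id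
    have hIndB : ∀ j, IndepFun (B j) (g j) ℙ := fun j =>
      (hIndepPair j).comp measurable_snd measurable_id
    -- integrability of products
    have hYBgint : ∀ j, Integrable (fun ω => Y j ω * B j ω * g j ω) := by
      intro j
      refine (hYint j).abs.mono'
        (((hYm j).mul (hBm j)).mul (hgm j)).aestronglyMeasurable
        (ae_of_all _ fun ω => ?_)
      rw [Real.norm_eq_abs, abs_mul, abs_mul]
      have h1 : |B j ω| ≤ 1 := by rcases h01 j ω with h | h <;> simp [h]
      have h2 : |g j ω| ≤ 1 := by rw [abs_of_nonneg (hg0 j ω)]; exact hgle j ω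
      calc |Y j ω| * |B j ω| * |g j ω| ≤ |Y j ω| * 1 * 1 := by
            apply mul_le_mul (mul_le_mul le_rfl h1 (abs_nonneg _) (abs_nonneg _)) h2
              (abs_nonneg _) (by positivity)
        _ = |Y j ω| := by ring
    have hBgint : ∀ j, Integrable (fun ω => B j ω * g j ω) := by
      intro j
      refine (integrable_const (1:ℝ)).mono'
        ((hBm j).mul (hgm j)).aestronglyMeasurable (ae_of_all _ fun ω => ?_)
      rw [Real.norm_eq_abs, abs_mul]
      have h1 : |B j ω| ≤ 1 := by rcases h01 j ω with h | h <;> simp [h]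
      have h2 : |g j ω| ≤ 1 := by rw [abs_of_nonneg (hg0 j ω)]; exact hgle j ω
      calc |B j ω| * |g j ω| ≤ 1 * 1 := mul_le_mul h1 h2 (abs_nonneg _) zero_le_one
        _ = 1 := one_mul 1
    -- integral factorizations
    have hEYBg : ∀ j, ∫ ω, Y j ω * B j ω * g j ω = m * ∫ ω, g j ω := by
      intro j
      have := (hIndYB j).integral_mul_eq_mul_integral ((hYm j).mul (hBm j)).aestronglyMeasurable
        (hgm j).aestronglyMeasurable
      simp only [Pi.mul_apply] at this
      rw [this, hEYB j]
    have hEBg : ∀ j, ∫ ω, B j ω * g j ω = p * ∫ ω, g j ω := by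
      intro j
      have := (hIndB j).integral_mul_eq_mul_integral (hBm j).aestronglyMeasurable
        (hgm j).aestronglyMeasurable
      simp only [Pi.mul_apply] at this
      rw [this, hEBi j]
    -- rewrite the main integrand as a sum
    have hpt : ∀ ω, (if 0 < S ω then (∑ i ∈ Finset.range n, Y i ω * B i ω) / S ω else 0)
        = ∑ j ∈ Finset.range n, Y j ω * B j ω * g j ω := by
      intro ω
      have h0 : (if 0 < S ω then (∑ i ∈ Finset.range n, Y i ω * B i ω) / S ω else 0)
          = ∑ j ∈ Finset.range n, Y j ω * B j ω * (if 0 < S ω then (S ω)⁻¹ else 0) := by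
        split_ifs with hS
        · rw [div_eq_mul_inv, Finset.sum_mul]
        · simp
      rw [h0]
      refine Finset.sum_congr rfl fun j hj => ?_
      rw [mul_assoc, key j hj ω, ← mul_assoc]
    have hpt2 : ∀ ω, (if 0 < S ω then (1:ℝ) else 0)
        = ∑ j ∈ Finset.range n, B j ω * g j ω := by
      intro ω
      have h0 : (if 0 < S ω then (1:ℝ) else 0)
          = ∑ j ∈ Finset.range n, B j ω * (if 0 < S ω then (S ω)⁻¹ else 0) := by
        rw [← Finset.sum_mul]
        split_ifs with hS
        · exact (mul_inv_cancel₀ (ne_of_gt hS)).symm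
        · simp
      rw [h0]
      exact Finset.sum_congr rfl fun j hj => key j hj ω
    -- probability of the event as an integral
    have hAset : MeasurableSet {ω | 0 < S ω} := hSm measurableSet_Ioi
    have hPA : (ℙ {ω | 0 < S ω}).toReal = ∫ ω, (if 0 < S ω then (1:ℝ) else 0) := by
      rw [← measureReal_def, ← integral_indicator_one hAset]
      refine integral_congr_ae (ae_of_all _ fun ω => ?_)
      by_cases hω : 0 < S ω <;> simp [Set.indicator_apply, Set.mem_setOf_eq, hω]
    -- put it together
    have hL : (∫ ω, if 0 < S ω then (∑ i ∈ Finset.range n, Y i ω * B i ω) / S ω else 0)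
        = m * ∑ j ∈ Finset.range n, ∫ ω, g j ω := by
      rw [integral_congr_ae (ae_of_all _ hpt),
        integral_finset_sum _ fun j _ => hYBgint j, Finset.mul_sum]
      exact Finset.sum_congr rfl fun j _ => hEYBg j
    have hR : (ℙ {ω | 0 < S ω}).toReal = p * ∑ j ∈ Finset.range n, ∫ ω, g j ω := by
      rw [hPA, integral_congr_ae (ae_of_all _ hpt2),
        integral_finset_sum _ fun j _ => hBgint j, Finset.mul_sum]
      exact Finset.sum_congr rfl fun j _ => hEBg j
    rw [hL, hR]
    field_simp
  · rw [hEB]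
    field_simp
  · rw [hEB, sub_eq_zero, div_eq_iff hppos.ne', sub_eq_zero]
end

section
/- Let (Ω, F, P) be a probability space, let d < t₀ be real numbers, and let X : Ω × ℝ → ℝ be jointly measurable such that: for every ω the function z ↦ X(ω,z) is differentiable on an open interval containing [d,t₀]; there is an integrable g : Ω → ℝ with |∂_z X(ω,z)| ≤ g(ω) for all z ∈ [d,t₀] and all ω; ω ↦ X(ω,d) is integrable; and (z,ω) ↦ ∂_z X(ω,z) is jointly measurable. Let O : [d,t₀] × Ω → {0,1} be jointly measurable with p(z) := P(O(z,·) = 1) > 0 for all z ∈ [d,t₀], and suppose that for each z ∈ [d,t₀] the random variables ω ↦ ∂_z X(ω,z) and ω ↦ O(z,ω) are independent. Then E[X(·,t₀)] = ∫_d^{t₀} E[∂_z X(·,z) · O(z,·)] / p(z) dz + E[X(·,d)]; that is, the population target of the FTC mean estimator — built from the observed-sample mean of the derivatives and the fully observed value at d — equals the true mean at t₀, even though X itself may be dependent on the observation process O. (Population-level identity underlying the mean part of Theorem 1 under Violation (V).) -/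
open MeasureTheory ProbabilityTheory Filter Topology intervalIntegral

/-- Population-level identity underlying the mean part of Theorem 1 under
Violation (V): for a jointly measurable process `X` with differentiable sample
paths on an open interval containing `[d,t₀]`, pathwise derivative dominated by
an integrable envelope, `X(·,d)` integrable, and an observation indicator
process `O` with values in `{0,1}`, observation probabilities
`p(z) = P(O(z,·) = 1) > 0`, such that for each `z ∈ [d,t₀]` the derivative
`∂_z X(·,z)` is independent of `O(z,·)`, one has
`E[X(·,t₀)] = ∫_d^{t₀} E[∂_z X(·,z)·O(z,·)]/p(z) dz + E[X(·,d)]`. -/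
theorem ftc_mean_population_identity {Ω : Type*} [MeasureSpace Ω]
    [IsProbabilityMeasure (ℙ : Measure Ω)]
    (d t₀ : ℝ) (hdt : d < t₀) (X : Ω → ℝ → ℝ)
    (hXmeas : Measurable fun p : Ω × ℝ => X p.1 p.2)
    (c e : ℝ) (hcd : c < d) (hte : t₀ < e)
    (hdiff : ∀ ω, ∀ z ∈ Set.Ioo c e, DifferentiableAt ℝ (X ω) z)
    (g : Ω → ℝ) (hg : Integrable g)
    (hX'bd : ∀ ω, ∀ z ∈ Set.Icc d t₀, |deriv (X ω) z| ≤ g ω)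
    (hXd : Integrable fun ω => X ω d)
    (hX'meas : Measurable fun p : ℝ × Ω => deriv (X p.2) p.1)
    (O : ℝ → Ω → ℝ)
    (hOmeas : Measurable fun p : ℝ × Ω => O p.1 p.2)
    (hO01 : ∀ z ∈ Set.Icc d t₀, ∀ ω, O z ω = 0 ∨ O z ω = 1)
    (hp : ∀ z ∈ Set.Icc d t₀, 0 < ℙ {ω | O z ω = 1})
    (hindep : ∀ z ∈ Set.Icc d t₀, IndepFun (fun ω => deriv (X ω) z) (O z)) :
    (∫ ω, X ω t₀) =
      (∫ z in d..t₀, (∫ ω, deriv (X ω) z * O z ω) / (ℙ {ω | O z ω = 1}).toReal)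
        + ∫ ω, X ω d := by
  have hle : d ≤ t₀ := hdt.le
  have hsub : Set.Icc d t₀ ⊆ Set.Ioo c e := fun z hz =>
    ⟨hcd.trans_le hz.1, lt_of_le_of_lt hz.2 hte⟩
  -- measurability helpers
  have hDmeas : ∀ z : ℝ, Measurable fun ω => deriv (X ω) z := fun z =>
    hX'meas.comp (measurable_const.prodMk measurable_id)
  have hDmeasω : ∀ ω : Ω, Measurable fun z => deriv (X ω) z := fun ω =>
    hX'meas.comp (measurable_id.prodMk measurable_const)
  have hOzmeas : ∀ z : ℝ, Measurable (O z) := fun z =>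
    hOmeas.comp (measurable_const.prodMk measurable_id)
  -- integrability of the derivative at each fixed z
  have hDint : ∀ z ∈ Set.Icc d t₀, Integrable fun ω => deriv (X ω) z := by
    intro z hz
    refine hg.mono' (hDmeas z).aestronglyMeasurable ?_
    exact Eventually.of_forall fun ω => by
      simpa [Real.norm_eq_abs] using hX'bd ω z hz
  -- integrability of O z
  have hOint : ∀ z ∈ Set.Icc d t₀, Integrable (O z) := by
    intro z hz
    refine (integrable_const (1 : ℝ)).mono' (hOzmeas z).aestronglyMeasurable ?_
    refine Eventually.of_forall fun ω => ?_
    rcases hO01 z hz ω with h | h <;> simp [h]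
  -- E[O z] = p(z)
  have hOeq : ∀ z ∈ Set.Icc d t₀, ∫ ω, O z ω = (ℙ {ω | O z ω = 1}).toReal := by
    intro z hz
    have hset : MeasurableSet {ω | O z ω = 1} := (hOzmeas z) (measurableSet_singleton 1)
    have heq : (fun ω => O z ω) = Set.indicator {ω | O z ω = 1} (fun _ => (1 : ℝ)) := by
      funext ω
      rcases hO01 z hz ω with h | h
      · simp [Set.indicator_apply, Set.mem_setOf_eq, h]
      · simp [Set.indicator_apply, Set.mem_setOf_eq, h]
    rw [heq, integral_indicator_const _ hset]
    simp [measureReal_def]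
  -- key pointwise identity for the integrand
  have key : ∀ z ∈ Set.Icc d t₀,
      (∫ ω, deriv (X ω) z * O z ω) / (ℙ {ω | O z ω = 1}).toReal
        = ∫ ω, deriv (X ω) z := by
    intro z hz
    have h1 : ∫ ω, deriv (X ω) z * O z ω
        = (∫ ω, deriv (X ω) z) * ∫ ω, O z ω :=
      (hindep z hz).integral_mul_eq_mul_integral (hDint z hz).aestronglyMeasurable (hOint z hz).aestronglyMeasurable
    have hp0 : (ℙ {ω | O z ω = 1}).toReal ≠ 0 := by
      have := hp z hz
      exact (ENNReal.toReal_pos this.ne' (measure_ne_top _ _)).ne'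
    rw [h1, hOeq z hz, mul_div_assoc, div_self hp0, mul_one]
  -- FTC per sample path
  have hIIω : ∀ ω, IntervalIntegrable (deriv (X ω)) volume d t₀ := by
    intro ω
    rw [intervalIntegrable_iff_integrableOn_Icc_of_le hle]
    refine Integrable.mono' (g := fun _ => g ω)
      (integrableOn_const measure_Icc_lt_top.ne)
      (hDmeasω ω).aestronglyMeasurable ?_
    refine (ae_restrict_iff' measurableSet_Icc).2 (Eventually.of_forall fun z hz => ?_)
    simpa [Real.norm_eq_abs] using hX'bd ω z hz
  have hFTC : ∀ ω, ∫ z in d..t₀, deriv (X ω) z = X ω t₀ - X ω d := by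
    intro ω
    refine integral_deriv_eq_sub (fun z hz => hdiff ω z (hsub ?_)) (hIIω ω)
    rwa [Set.uIcc_of_le hle] at hz
  -- integrability of X · t₀ - X · d
  have hsubint : Integrable fun ω => X ω t₀ - X ω d := by
    have hmeas : Measurable fun ω => X ω t₀ - X ω d :=
      (hXmeas.comp (measurable_id.prodMk measurable_const)).sub
        (hXmeas.comp (measurable_id.prodMk measurable_const))
    refine (hg.const_mul (t₀ - d)).mono' hmeas.aestronglyMeasurable ?_
    refine Eventually.of_forall fun ω => ?_
    rw [← hFTC ω]
    have hb : ∀ z ∈ Set.Ioc d t₀, ‖deriv (X ω) z‖ ≤ g ω := fun z hz => by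
      simpa [Real.norm_eq_abs] using hX'bd ω z ⟨hz.1.le, hz.2⟩
    calc ‖∫ z in d..t₀, deriv (X ω) z‖
        ≤ g ω * |t₀ - d| := intervalIntegral.norm_integral_le_of_norm_le_const
          (by intro z hz; exact hb z (by rwa [Set.uIoc_of_le hle] at hz))
      _ = (t₀ - d) * g ω := by
          rw [abs_of_nonneg (sub_nonneg.2 hle), mul_comm]
  have hXt : Integrable fun ω => X ω t₀ := by
    exact (hsubint.add hXd).congr (Eventually.of_forall fun ω => by simp)
  -- Fubini
  have hprodint : Integrable (fun p : ℝ × Ω => deriv (X p.2) p.1)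
      ((volume.restrict (Set.Ioc d t₀)).prod ℙ) := by
    have hsm : AEStronglyMeasurable (fun p : ℝ × Ω => deriv (X p.2) p.1)
        ((volume.restrict (Set.Ioc d t₀)).prod ℙ) :=
      hX'meas.aestronglyMeasurable
    refine (integrable_prod_iff hsm).2 ⟨?_, ?_⟩
    · refine (ae_restrict_iff' measurableSet_Ioc).2 (Eventually.of_forall fun z hz => ?_)
      exact hDint z ⟨hz.1.le, hz.2⟩
    · have hmeas2 : AEStronglyMeasurable
          (fun z => ∫ ω, ‖deriv (X ω) z‖) (volume.restrict (Set.Ioc d t₀)) :=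
        (hX'meas.norm.stronglyMeasurable.integral_prod_right').aestronglyMeasurable
      refine Integrable.mono' (g := fun _ => ∫ ω, g ω)
        (integrableOn_const measure_Ioc_lt_top.ne) hmeas2 ?_
      refine (ae_restrict_iff' measurableSet_Ioc).2 (Eventually.of_forall fun z hz => ?_)
      have hzI : z ∈ Set.Icc d t₀ := ⟨hz.1.le, hz.2⟩
      have h1 : ∫ ω, ‖deriv (X ω) z‖ ≤ ∫ ω, g ω := by
        refine integral_mono (hDint z hzI).norm hg fun ω => ?_
        simpa [Real.norm_eq_abs] using hX'bd ω z hzI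
      have h2 : 0 ≤ ∫ ω, ‖deriv (X ω) z‖ := integral_nonneg fun ω => norm_nonneg _
      rw [Real.norm_eq_abs, abs_of_nonneg h2]
      exact h1
  have hswap : ∫ z in Set.Ioc d t₀, (∫ ω, deriv (X ω) z)
      = ∫ ω, ∫ z in Set.Ioc d t₀, deriv (X ω) z :=
    integral_integral_swap hprodint
  -- put everything together
  have hmain : (∫ z in d..t₀, (∫ ω, deriv (X ω) z * O z ω) / (ℙ {ω | O z ω = 1}).toReal)
      = (∫ ω, X ω t₀) - ∫ ω, X ω d := by
    have hcong : (∫ z in d..t₀, (∫ ω, deriv (X ω) z * O z ω) / (ℙ {ω | O z ω = 1}).toReal)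
        = ∫ z in d..t₀, ∫ ω, deriv (X ω) z := by
      refine intervalIntegral.integral_congr fun z hz => ?_
      rw [Set.uIcc_of_le hle] at hz
      exact key z hz
    rw [hcong, intervalIntegral.integral_of_le hle, hswap]
    have : (fun ω => ∫ z in Set.Ioc d t₀, deriv (X ω) z)
        = fun ω => X ω t₀ - X ω d := by
      funext ω
      rw [← intervalIntegral.integral_of_le hle]
      exact hFTC ω
    rw [this, integral_sub hXt hXd]
  rw [hmain]
  ring
end
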